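/- Fix ℓ ≥ 1 and ζ > 0, and let (P_k^{(ℓ)}) and (P_k^{(ℓ−1)}) be orthonormal families for ω^{(ℓ)}(·;ζ) and ω^{(ℓ−1)}(·;ζ), with positive leading coefficients c_k^{(ℓ)}, c_k^{(ℓ−1)}. Define p_k := c_k^{(ℓ−1)}/c_k^{(ℓ)}, p̃_k := ((2ℓ−1)/(2ℓ+1))·c_k^{(ℓ)}/c_{k+1}^{(ℓ−1)}, r̃_k := p_k·(1 − ((2ℓ+1)/(2ℓ−1))·p̃_k²), and q̃_k := σ(P_{k+1}^{(ℓ−1)}) − σ(P_k^{(ℓ)}), where for a real polynomial P of degree d ≥ 1 with leading coefficient c, σ(P) := −(coefficient of x^{d−1} in P)/c (the sum of the roots of P), and σ(P₀^{(ℓ)}) := 0. Then for every k ≥ 0 and all x ∈ ℝ: ((2ℓ−1)/(2ℓ+1))·(x²−1)·P_k^{(ℓ)}(x) = p̃_k·(x + q̃_k)·P_{k+1}^{(ℓ−1)}(x) + r̃_k·P_k^{(ℓ−1)}(x), and P_{k+1}^{(ℓ−1)}(x) = ((2ℓ−1)/(2ℓ+1))·(1/p̃_k)·(x − q̃_k)·P_k^{(ℓ)}(x)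 − (c_{k−1}^{(ℓ)}·c_{k+1}^{(ℓ−1)})/(c_k^{(ℓ)}·c_k^{(ℓ−1)})·r̃_k·P_{k−1}^{(ℓ)}(x) (with P_{−1}^{(ℓ)} := 0). -/

import Mathlib

open MeasureTheory Polynomial

/-- `K₂(ζ) = ∫₀^∞ cosh(2t)·exp(−ζ·cosh t) dt`. -/
noncomputable def K2 (ζ : ℝ) : ℝ :=
  ∫ t in Set.Ioi (0 : ℝ), Real.cosh (2 * t) * Real.exp (-ζ * Real.cosh t)

/-- The weight `ω^{(ℓ)}(x;ζ) = ζ·(x²−1)^{ℓ+1/2}·exp(−ζx)/((2ℓ+1)·K₂(ζ))` on `[1,∞)`. -/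
noncomputable def wgt (l : ℕ) (ζ : ℝ) (x : ℝ) : ℝ :=
  ζ * (x ^ 2 - 1) ^ ((l : ℝ) + 1 / 2) * Real.exp (-ζ * x) / ((2 * (l : ℝ) + 1) * K2 ζ)

/-- An orthonormal family for the weight `ω^{(ℓ)}(·;ζ)`: real polynomials `P k` of degree
exactly `k`, positive leading coefficients, orthonormal for the weighted inner product. -/
def IsOrthoFam (l : ℕ) (ζ : ℝ) (P : ℕ → Polynomial ℝ) : Prop :=
  (∀ k : ℕ, (P k).degree = k) ∧ (∀ k : ℕ, 0 < (P k).leadingCoeff) ∧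
  ∀ i k : ℕ, (∫ x in Set.Ioi (1 : ℝ), (P i).eval x * (P k).eval x * wgt l ζ x)
      = if i = k then 1 else 0

/-- `p_k = c_k^{(ℓ−1)} / c_k^{(ℓ)}`; `Q` is the family for `ℓ−1`, `P` for `ℓ`. -/
noncomputable def pC (P Q : ℕ → Polynomial ℝ) (k : ℕ) : ℝ :=
  (Q k).leadingCoeff / (P k).leadingCoeff

/-- `p̃_k = ((2ℓ−1)/(2ℓ+1))·c_k^{(ℓ)}/c_{k+1}^{(ℓ−1)}`. -/
noncomputable def ptC (l : ℕ) (P Q : ℕ → Polynomial ℝ) (k : ℕ) : ℝ :=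
  ((2 * (l : ℝ) - 1) / (2 * (l : ℝ) + 1)) * (P k).leadingCoeff / (Q (k + 1)).leadingCoeff

/-- `σ(P)`: the sum of the roots of `P`, i.e. minus the ratio of the subleading to the
leading coefficient; `σ` of a constant polynomial is `0`. -/
noncomputable def rootSum (P : Polynomial ℝ) : ℝ :=
  if P.natDegree = 0 then 0 else -(P.coeff (P.natDegree - 1)) / P.leadingCoeff

/-- `q̃_k = σ(P_{k+1}^{(ℓ−1)}) − σ(P_k^{(ℓ)})`. -/
noncomputable def qtC (P Q : ℕ → Polynomial ℝ) (k : ℕ) : ℝ :=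
  rootSum (Q (k + 1)) - rootSum (P k)

/-- `r̃_k = p_k·(1 − ((2ℓ+1)/(2ℓ−1))·p̃_k²)`. -/
noncomputable def rtC (l : ℕ) (P Q : ℕ → Polynomial ℝ) (k : ℕ) : ℝ :=
  pC P Q k * (1 - ((2 * (l : ℝ) + 1) / (2 * (l : ℝ) - 1)) * (ptC l P Q k) ^ 2)

section Helpers
open Set

lemma fam_ne_zero {R : ℕ → Polynomial ℝ} (hdeg : ∀ k, (R k).degree = k) (k : ℕ) : R k ≠ 0 := by
  intro h
  have h2 := hdeg k
  rw [h, degree_zero] at h2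
  exact absurd h2 (by simp)

lemma fam_lc_ne_zero {R : ℕ → Polynomial ℝ} (hdeg : ∀ k, (R k).degree = k) (k : ℕ) :
    (R k).leadingCoeff ≠ 0 := leadingCoeff_ne_zero.2 (fam_ne_zero hdeg k)

lemma fam_natDegree {R : ℕ → Polynomial ℝ} (hdeg : ∀ k, (R k).degree = k) (k : ℕ) :
    (R k).natDegree = k := natDegree_eq_of_degree_eq_some (hdeg k)

lemma fam_coeff_self {R : ℕ → Polynomial ℝ} (hdeg : ∀ k, (R k).degree = k) (k : ℕ) :
    (R k).coeff k = (R k).leadingCoeff := by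
  rw [leadingCoeff, fam_natDegree hdeg]

lemma fam_coeff_zero {R : ℕ → Polynomial ℝ} (hdeg : ∀ k, (R k).degree = k) {k m : ℕ}
    (h : k < m) : (R k).coeff m = 0 :=
  coeff_eq_zero_of_natDegree_lt (by rw [fam_natDegree hdeg]; exact h)

lemma expand_aux (R : ℕ → Polynomial ℝ) (hdeg : ∀ k, (R k).degree = k) :
    ∀ n : ℕ, ∀ p : Polynomial ℝ, p.degree ≤ (n : WithBot ℕ) →
      ∃ a : ℕ → ℝ, p = ∑ j ∈ Finset.range (n+1), Polynomial.C (a j) * R j := by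
  intro n
  induction n with
  | zero =>
    intro p hp
    refine ⟨fun _ => p.coeff 0 / (R 0).coeff 0, ?_⟩
    have h0 : (R 0).degree = (0 : ℕ) := hdeg 0
    have hR0 : R 0 = C ((R 0).coeff 0) := eq_C_of_degree_le_zero (le_of_eq h0)
    have hne : (R 0).coeff 0 ≠ 0 := by
      have := fam_lc_ne_zero hdeg 0
      rwa [leadingCoeff, fam_natDegree hdeg] at this
    rw [eq_C_of_degree_le_zero hp]
    rw [Finset.range_one, Finset.sum_singleton]
    nth_rewrite 2 [hR0]
    rw [← C_mul, div_mul_cancel₀ _ hne]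
    simp
  | succ n ih =>
    intro p hp
    set c := p.coeff (n+1) / (R (n+1)).leadingCoeff with hc
    have hdn : (R (n+1)).natDegree = n+1 := fam_natDegree hdeg (n+1)
    have hne : (R (n+1)).leadingCoeff ≠ 0 := fam_lc_ne_zero hdeg (n+1)
    have hq : (p - C c * R (n+1)).degree ≤ (n : WithBot ℕ) := by
      rw [degree_le_iff_coeff_zero]
      intro m hm
      have hm' : n < m := by exact_mod_cast hm
      rcases eq_or_lt_of_le (Nat.succ_le_of_lt hm') with h | h
      · rw [coeff_sub, coeff_C_mul, ← h]
        rw [fam_coeff_self hdeg, hc, div_mul_cancel₀ _ hne, sub_self]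
      · rw [coeff_sub, coeff_C_mul]
        have h1 : p.coeff m = 0 := by
          apply coeff_eq_zero_of_natDegree_lt
          have := natDegree_le_iff_degree_le.2 hp
          omega
        have h2 : (R (n+1)).coeff m = 0 := by
          apply coeff_eq_zero_of_natDegree_lt
          omega
        rw [h1, h2, mul_zero, sub_self]
    obtain ⟨a, ha⟩ := ih _ hq
    refine ⟨fun j => if j = n+1 then c else a j, ?_⟩
    have heq : ∑ j ∈ Finset.range (n+1), C (if j = n+1 then c else a j) * R j
        = ∑ j ∈ Finset.range (n+1), C (a j) * R j := by
      apply Finset.sum_congr rfl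
      intro j hj
      rw [Finset.mem_range] at hj
      rw [if_neg (by omega)]
    rw [Finset.sum_range_succ, heq]
    have hb : (fun j => if j = n + 1 then c else a j) (n + 1) = c := by simp
    rw [hb, ← ha]
    ring

variable {w : ℝ → ℝ} {R : ℕ → Polynomial ℝ}

lemma pair_aesm (hw : AEStronglyMeasurable w (volume.restrict (Ioi 1))) (p q : Polynomial ℝ) :
    AEStronglyMeasurable (fun x => p.eval x * q.eval x * w x) (volume.restrict (Ioi 1)) :=
  ((p.continuous_aeval.aestronglyMeasurable.mul q.continuous_aeval.aestronglyMeasurable).mul hw)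

lemma int_pair (hw : AEStronglyMeasurable w (volume.restrict (Ioi 1)))
    (horth : ∀ i k, (∫ x in Ioi (1:ℝ), (R i).eval x * (R k).eval x * w x) = if i = k then 1 else 0)
    (i k : ℕ) : IntegrableOn (fun x => (R i).eval x * (R k).eval x * w x) (Ioi 1) := by
  have self : ∀ j : ℕ, IntegrableOn (fun x => (R j).eval x * (R j).eval x * w x) (Ioi 1) := by
    intro j
    by_contra h
    have h2 := horth j j
    rw [integral_undef h] at h2
    simp at h2
  have hbig : IntegrableOn
      (fun x => |(R i).eval x * (R i).eval x * w x| + |(R k).eval x * (R k).eval x * w x|)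
      (Ioi 1) := (self i).abs.add (self k).abs
  refine Integrable.mono hbig (pair_aesm hw _ _) ?_
  filter_upwards with x
  simp only [Real.norm_eq_abs]
  have h1 : |(R i).eval x * (R k).eval x * w x| ≤
      |(R i).eval x * (R i).eval x * w x| + |(R k).eval x * (R k).eval x * w x| := by
    have e1 : ∀ a b c : ℝ, |a * b * c| = |a| * |b| * |c| := by
      intro a b c; rw [abs_mul, abs_mul]
    rw [e1, e1, e1]
    have : |(R i).eval x| * |(R k).eval x| ≤
        |(R i).eval x| * |(R i).eval x| + |(R k).eval x| * |(R k).eval x| := by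
      nlinarith [abs_nonneg ((R i).eval x), abs_nonneg ((R k).eval x),
        sq_nonneg (|(R i).eval x| - |(R k).eval x|)]
    nlinarith [abs_nonneg (w x)]
  calc |(R i).eval x * (R k).eval x * w x| ≤ _ := h1
    _ ≤ |_| := le_abs_self _

lemma sum_fun_eq (a : ℕ → ℝ) (n : ℕ) (i : ℕ)
    (p : Polynomial ℝ) (ha : p = ∑ j ∈ Finset.range (n+1), Polynomial.C (a j) * R j) :
    (fun x => p.eval x * (R i).eval x * w x)
      = fun x => ∑ j ∈ Finset.range (n+1), a j * ((R j).eval x * (R i).eval x * w x) := by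
  funext x
  rw [ha, eval_finset_sum, Finset.sum_mul, Finset.sum_mul]
  apply Finset.sum_congr rfl
  intro j _
  simp only [eval_mul, eval_C]
  ring

lemma int_poly (hdeg : ∀ k, (R k).degree = k)
    (hw : AEStronglyMeasurable w (volume.restrict (Ioi 1)))
    (horth : ∀ i k, (∫ x in Ioi (1:ℝ), (R i).eval x * (R k).eval x * w x) = if i = k then 1 else 0)
    (p : Polynomial ℝ) (i : ℕ) :
    IntegrableOn (fun x => p.eval x * (R i).eval x * w x) (Ioi 1) := by
  obtain ⟨a, ha⟩ := expand_aux R hdeg p.natDegree p degree_le_natDegree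
  rw [sum_fun_eq a p.natDegree i p ha]
  exact integrable_finset_sum _ (fun j _ => ((int_pair hw horth j i).const_mul _))

lemma int_val (hdeg : ∀ k, (R k).degree = k)
    (hw : AEStronglyMeasurable w (volume.restrict (Ioi 1)))
    (horth : ∀ i k, (∫ x in Ioi (1:ℝ), (R i).eval x * (R k).eval x * w x) = if i = k then 1 else 0)
    {n : ℕ} {p : Polynomial ℝ} {a : ℕ → ℝ}
    (ha : p = ∑ j ∈ Finset.range (n+1), Polynomial.C (a j) * R j) (i : ℕ) :
    (∫ x in Ioi (1:ℝ), p.eval x * (R i).eval x * w x) = if i ≤ n then a i else 0 := by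
  rw [sum_fun_eq a n i p ha,
    integral_finset_sum _ (fun j _ => ((int_pair hw horth j i).const_mul _))]
  have h1 : ∀ j ∈ Finset.range (n+1),
      (∫ x in Ioi (1:ℝ), a j * ((R j).eval x * (R i).eval x * w x)) = if j = i then a j else 0 := by
    intro j _
    rw [MeasureTheory.integral_const_mul, horth j i]
    split <;> simp
  rw [Finset.sum_congr rfl h1, Finset.sum_ite_eq' _ i a]
  simp [Finset.mem_range, Nat.lt_succ_iff]

lemma int_zero (hdeg : ∀ k, (R k).degree = k)
    (hw : AEStronglyMeasurable w (volume.restrict (Ioi 1)))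
    (horth : ∀ i k, (∫ x in Ioi (1:ℝ), (R i).eval x * (R k).eval x * w x) = if i = k then 1 else 0)
    {n i : ℕ} (p : Polynomial ℝ) (hp : p.degree ≤ (n : WithBot ℕ)) (hi : n < i) :
    (∫ x in Ioi (1:ℝ), p.eval x * (R i).eval x * w x) = 0 := by
  obtain ⟨a, ha⟩ := expand_aux R hdeg n p hp
  rw [int_val hdeg hw horth ha i, if_neg (by omega)]

lemma int_top (hdeg : ∀ k, (R k).degree = k)
    (hw : AEStronglyMeasurable w (volume.restrict (Ioi 1)))
    (horth : ∀ i k, (∫ x in Ioi (1:ℝ), (R i).eval x * (R k).eval x * w x) = if i = k then 1 else 0)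
    {n : ℕ} (p : Polynomial ℝ) (hp : p.degree ≤ (n : WithBot ℕ)) :
    (∫ x in Ioi (1:ℝ), p.eval x * (R n).eval x * w x) = p.coeff n / (R n).leadingCoeff := by
  obtain ⟨a, ha⟩ := expand_aux R hdeg n p hp
  rw [int_val hdeg hw horth ha n, if_pos (le_refl n)]
  have hcoef : p.coeff n = a n * (R n).leadingCoeff := by
    rw [ha, finset_sum_coeff, Finset.sum_range_succ]
    have h0 : ∀ j ∈ Finset.range n, (Polynomial.C (a j) * R j).coeff n = 0 := by
      intro j hj
      rw [coeff_C_mul,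
        coeff_eq_zero_of_natDegree_lt (by rw [fam_natDegree hdeg]; exact Finset.mem_range.1 hj),
        mul_zero]
    rw [Finset.sum_congr rfl h0]
    simp [coeff_C_mul, fam_coeff_self hdeg]
  rw [hcoef, mul_div_cancel_right₀ _ (fam_lc_ne_zero hdeg n)]

lemma wgt_aesm (l : ℕ) (ζ : ℝ) :
    AEStronglyMeasurable (wgt l ζ) (volume.restrict (Ioi 1)) := by
  apply ContinuousOn.aestronglyMeasurable _ measurableSet_Ioi
  apply ContinuousOn.div_const
  apply ContinuousOn.mul
  apply ContinuousOn.mul continuousOn_const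
  · apply ContinuousOn.rpow_const
    · fun_prop
    · intro x hx
      left
      simp only [mem_Ioi] at hx
      nlinarith
  · fun_prop

lemma wgt_rel {l : ℕ} (hl : 1 ≤ l) (ζ : ℝ) {x : ℝ} (hx : x ∈ Ioi (1:ℝ)) :
    wgt l ζ x = ((2 * (l : ℝ) - 1) / (2 * (l : ℝ) + 1)) * (x ^ 2 - 1) * wgt (l - 1) ζ x := by
  simp only [mem_Ioi] at hx
  have h1 : (0:ℝ) < x ^ 2 - 1 := by nlinarith
  have hc : ((l - 1 : ℕ) : ℝ) = (l : ℝ) - 1 := by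
    push_cast [Nat.cast_sub hl]
    ring
  have hl1 : (1:ℝ) ≤ (l:ℝ) := by exact_mod_cast hl
  have hr : (x ^ 2 - 1) ^ ((l : ℝ) + 1 / 2)
      = (x ^ 2 - 1) ^ (((l : ℝ) - 1) + 1 / 2) * (x ^ 2 - 1) := by
    rw [show ((l:ℝ) + 1 / 2) = ((l:ℝ) - 1 + 1 / 2) + 1 by ring, Real.rpow_add h1,
      Real.rpow_one]
  unfold wgt
  rw [hc, hr]
  have h2 : 2 * ((l:ℝ) - 1) + 1 = 2 * (l:ℝ) - 1 := by ring
  rw [h2]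
  have hne1 : 2 * (l:ℝ) - 1 ≠ 0 := by nlinarith
  have hne2 : 2 * (l:ℝ) + 1 ≠ 0 := by nlinarith
  rcases eq_or_ne (K2 ζ) 0 with hK | hK
  · simp [hK]
  · field_simp
    ring_nf
    have hne1' : -1 + (l:ℝ) * 2 ≠ 0 := fun h => hne1 (by linarith)
    field_simp
    ring

lemma coeff_helper1 (p : Polynomial ℝ) (m : ℕ) :
    (((X:Polynomial ℝ)^2 - 1) * p).coeff m = (if 2 ≤ m then p.coeff (m-2) else 0) - p.coeff m := by
  have h : ((X:Polynomial ℝ)^2 - 1) * p = p * X^2 - p := by ring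
  rw [h, coeff_sub, coeff_mul_X_pow']

lemma coeff_helper2 (q : ℝ) (p : Polynomial ℝ) (m : ℕ) :
    (((X:Polynomial ℝ) + C q) * p).coeff m
      = (if 1 ≤ m then p.coeff (m-1) else 0) + q * p.coeff m := by
  have h : ((X:Polynomial ℝ) + C q) * p = p * X^1 + C q * p := by ring
  rw [h, coeff_add, coeff_mul_X_pow', coeff_C_mul]

lemma coeff_helper3 (q : ℝ) (p : Polynomial ℝ) (m : ℕ) :
    (((X:Polynomial ℝ) - C q) * p).coeff m
      = (if 1 ≤ m then p.coeff (m-1) else 0) - q * p.coeff m := by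
  have h : ((X:Polynomial ℝ) - C q) * p = p * X^1 - C q * p := by ring
  rw [h, coeff_sub, coeff_mul_X_pow', coeff_C_mul]

lemma alg_D (L A B G : ℝ) (hA : A ≠ 0) (hB : B ≠ 0) (h1 : 2*L-1 ≠ 0) (h2 : 2*L+1 ≠ 0) :
    G/A - (((2*L-1)/(2*L+1))*A/B)*(G/B)
      - (G/A)*(1 - ((2*L+1)/(2*L-1))*(((2*L-1)/(2*L+1))*A/B)^2) = 0 := by
  field_simp
  ring

lemma alg_E (L A B G Aj : ℝ) (hA : A ≠ 0) (hB : B ≠ 0) (hG : G ≠ 0)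
    (h1 : 2*L-1 ≠ 0) (h2 : 2*L+1 ≠ 0) :
    ((2*L-1)/(2*L+1)*A/B)*((2*L-1)/(2*L+1)*Aj/B) - ((2*L-1)/(2*L+1))*(Aj/A)
      + ((2*L-1)/(2*L+1)*A/B)*((Aj*B)/(A*G))
        *((G/A)*(1-((2*L+1)/(2*L-1))*(((2*L-1)/(2*L+1))*A/B)^2)) = 0 := by
  field_simp
  ring

end Helpers

open Set

theorem stmt9 (l : ℕ) (hl : 1 ≤ l) (ζ : ℝ) (hζ : 0 < ζ)
    (P Q : ℕ → Polynomial ℝ)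
    (hP : IsOrthoFam l ζ P) (hQ : IsOrthoFam (l - 1) ζ Q) :
    ∀ k : ℕ, ∀ x : ℝ,
      ((2 * (l : ℝ) - 1) / (2 * (l : ℝ) + 1)) * (x ^ 2 - 1) * (P k).eval x
          = ptC l P Q k * (x + qtC P Q k) * (Q (k + 1)).eval x
              + rtC l P Q k * (Q k).eval x ∧
      (Q (k + 1)).eval x
          = ((2 * (l : ℝ) - 1) / (2 * (l : ℝ) + 1)) * (1 / ptC l P Q k) * (x - qtC P Q k)
                * (P k).eval x
            - (if k = 0 then 0 else
                ((P (k - 1)).leadingCoeff * (Q (k + 1)).leadingCoeff)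
                  / ((P k).leadingCoeff * (Q k).leadingCoeff)
                  * rtC l P Q k * (P (k - 1)).eval x) := by
  
  obtain ⟨hPdeg, hPpos, hPorth⟩ := hP
  obtain ⟨hQdeg, hQpos, hQorth⟩ := hQ
  intro k x
  have hwa : AEStronglyMeasurable (wgt l ζ) (volume.restrict (Ioi 1)) := wgt_aesm l ζ
  have hwa' : AEStronglyMeasurable (wgt (l-1) ζ) (volume.restrict (Ioi 1)) := wgt_aesm (l-1) ζ
  set lam : ℝ := (2 * (l:ℝ) - 1) / (2 * (l:ℝ) + 1) with hlamdef
  have hl1 : (1:ℝ) ≤ (l:ℝ) := by exact_mod_cast hl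
  have h2l1 : (0:ℝ) < 2*(l:ℝ) - 1 := by linarith
  have h2l2 : (0:ℝ) < 2*(l:ℝ) + 1 := by linarith
  have hlampos : 0 < lam := div_pos h2l1 h2l2
  have hPlc : ∀ n, (P n).leadingCoeff ≠ 0 := fun n => ne_of_gt (hPpos n)
  have hQlc : ∀ n, (Q n).leadingCoeff ≠ 0 := fun n => ne_of_gt (hQpos n)
  set pt := ptC l P Q k with hptdef
  set qt := qtC P Q k with hqtdef
  set rt := rtC l P Q k with hrtdef
  have hpt : pt = lam * (P k).leadingCoeff / (Q (k+1)).leadingCoeff := rfl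
  have hptpos : 0 < pt := by
    rw [hpt]
    exact div_pos (mul_pos hlampos (hPpos k)) (hQpos (k+1))
  have hptne : pt ≠ 0 := ne_of_gt hptpos
  have hrsQ : rootSum (Q (k+1)) = -((Q (k+1)).coeff k) / (Q (k+1)).leadingCoeff := by
    unfold rootSum
    rw [fam_natDegree hQdeg]
    simp
  have hrt : rt = (Q k).leadingCoeff / (P k).leadingCoeff
      * (1 - ((2 * (l : ℝ) + 1) / (2 * (l : ℝ) - 1)) * pt ^ 2) := rfl
  -- ===================== Identity 1 =====================
  set Dp : Polynomial ℝ := Polynomial.C lam * ((X:Polynomial ℝ)^2 - 1) * P k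
    - Polynomial.C pt * ((X:Polynomial ℝ) + Polynomial.C qt) * Q (k+1)
    - Polynomial.C rt * Q k with hDp
  have hDcoeff : ∀ m : ℕ, Dp.coeff m
      = lam * ((if 2 ≤ m then (P k).coeff (m-2) else 0) - (P k).coeff m)
        - pt * ((if 1 ≤ m then (Q (k+1)).coeff (m-1) else 0) + qt * (Q (k+1)).coeff m)
        - rt * (Q k).coeff m := by
    intro m
    rw [hDp, coeff_sub, coeff_sub, mul_assoc, coeff_C_mul, coeff_helper1,
      mul_assoc, coeff_C_mul, coeff_helper2, coeff_C_mul]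
  have hDdeg : Dp.degree ≤ (k : WithBot ℕ) := by
    rw [degree_le_iff_coeff_zero]
    intro m hm
    have hm' : k < m := by exact_mod_cast hm
    have hPm : (P k).coeff m = 0 := fam_coeff_zero hPdeg hm'
    have hQm : (Q k).coeff m = 0 := fam_coeff_zero hQdeg hm'
    rw [hDcoeff m, hPm, hQm, mul_zero, sub_zero]
    rcases show m = k+1 ∨ m = k+2 ∨ k+3 ≤ m from by omega with h | h | h
    · subst h
      have hQm1 : (Q (k+1)).coeff (k+1) = (Q (k+1)).leadingCoeff := fam_coeff_self hQdeg (k+1)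
      rw [if_pos (by omega : 1 ≤ k+1)]
      simp only [Nat.add_sub_cancel]
      rcases Nat.eq_zero_or_pos k with rfl | hk
      · have hrsP : rootSum (P 0) = 0 := by
          unfold rootSum
          rw [fam_natDegree hPdeg]
          simp
        have hqt : qt = -((Q 1).coeff 0) / (Q 1).leadingCoeff := by
          rw [hqtdef]
          unfold qtC
          rw [hrsP, hrsQ, sub_zero]
        rw [if_neg (by omega : ¬ 2 ≤ 0+1), hQm1, hqt,
          div_mul_cancel₀ (-(Q 1).coeff 0) (hQlc 1)]
        ring
      · have hrsP : rootSum (P k) = -((P k).coeff (k-1)) / (P k).leadingCoeff := by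
          unfold rootSum
          rw [fam_natDegree hPdeg, if_neg (by omega)]
        have hqt : qt = -((Q (k+1)).coeff k) / (Q (k+1)).leadingCoeff
            + ((P k).coeff (k-1)) / (P k).leadingCoeff := by
          rw [hqtdef]; unfold qtC; rw [hrsP, hrsQ]; ring
        rw [if_pos (by omega : 2 ≤ k+1), hQm1, hqt, hpt]
        have h1 : k + 1 - 2 = k - 1 := by omega
        rw [h1]
        field_simp [hPlc k, hQlc (k+1)]
        ring
    · subst h
      have hPk : (P k).coeff (k+2-2) = (P k).leadingCoeff := by
        simpa using fam_coeff_self hPdeg k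
      have hQ1 : (Q (k+1)).coeff (k+2-1) = (Q (k+1)).leadingCoeff := by
        have : k+2-1 = k+1 := by omega
        rw [this]; exact fam_coeff_self hQdeg (k+1)
      have hQ2 : (Q (k+1)).coeff (k+2) = 0 := fam_coeff_zero hQdeg (by omega)
      rw [if_pos (by omega), if_pos (by omega), hPk, hQ1, hQ2, hpt]
      field_simp [hQlc (k+1)]
      ring
    · have h1 : (P k).coeff (m-2) = 0 := fam_coeff_zero hPdeg (by omega)
      have h2 : (Q (k+1)).coeff (m-1) = 0 := fam_coeff_zero hQdeg (by omega)
      have h3 : (Q (k+1)).coeff m = 0 := fam_coeff_zero hQdeg (by omega)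
      rw [h1, h2, h3]
      split <;> split <;> ring
  have hDint : ∀ j : ℕ, j ≤ k →
      (∫ y in Ioi (1:ℝ), Dp.eval y * (Q j).eval y * wgt (l-1) ζ y) = 0 := by
    intro j hj
    set f1 : ℝ → ℝ := fun y =>
      (Polynomial.C lam * ((X:Polynomial ℝ)^2 - 1) * P k).eval y * (Q j).eval y * wgt (l-1) ζ y
      with hf1
    set g1 : ℝ → ℝ := fun y => (Q j).eval y * (P k).eval y * wgt l ζ y with hg1
    have heq1 : Set.EqOn f1 g1 (Ioi 1) := by
      intro y hy
      simp only [hf1, hg1, eval_mul, eval_sub, eval_pow, eval_C, eval_X, eval_one]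
      rw [wgt_rel hl ζ hy]
      ring
    have hI1g : IntegrableOn g1 (Ioi 1) := int_poly hPdeg hwa hPorth (Q j) k
    have hI1 : IntegrableOn f1 (Ioi 1) :=
      (IntegrableOn.congr_fun hI1g heq1.symm measurableSet_Ioi)
    have hv1 : (∫ y in Ioi (1:ℝ), f1 y)
        = (if j = k then (Q k).leadingCoeff / (P k).leadingCoeff else 0) := by
      rw [setIntegral_congr_fun measurableSet_Ioi heq1]
      rcases eq_or_lt_of_le hj with rfl | hlt
      · rw [if_pos rfl]
        have := int_top hPdeg hwa hPorth (Q j) (le_of_eq (hQdeg j))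
        rwa [fam_coeff_self hQdeg] at this
      · rw [if_neg (by omega)]
        exact int_zero hPdeg hwa hPorth (Q j) (le_of_eq (hQdeg j)) hlt
    set f2 : ℝ → ℝ := fun y =>
      (Polynomial.C pt * ((X:Polynomial ℝ) + Polynomial.C qt) * Q (k+1)).eval y
        * (Q j).eval y * wgt (l-1) ζ y with hf2
    have heq2 : f2 = fun y => pt * ((((X:Polynomial ℝ) + Polynomial.C qt) * Q j).eval y
        * (Q (k+1)).eval y * wgt (l-1) ζ y) := by
      funext y
      simp only [hf2, eval_mul, eval_add, eval_C, eval_X]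
      ring
    have hI2 : IntegrableOn f2 (Ioi 1) := by
      rw [heq2]
      exact (int_poly hQdeg hwa' hQorth _ (k+1)).const_mul pt
    have hdg2 : (((X:Polynomial ℝ) + Polynomial.C qt) * Q j).degree ≤ ((j+1 : ℕ) : WithBot ℕ) := by
      rw [degree_le_iff_coeff_zero]
      intro m hm
      have hm' : j + 1 < m := by exact_mod_cast hm
      rw [coeff_helper2, fam_coeff_zero hQdeg (by omega), fam_coeff_zero hQdeg (by omega)]
      split <;> ring
    have hv2 : (∫ y in Ioi (1:ℝ), f2 y)
        = (if j = k then pt * ((Q k).leadingCoeff / (Q (k+1)).leadingCoeff) else 0) := by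
      rw [heq2, MeasureTheory.integral_const_mul]
      rcases eq_or_lt_of_le hj with rfl | hlt
      · rw [if_pos rfl]
        have := int_top hQdeg hwa' hQorth (((X:Polynomial ℝ) + Polynomial.C qt) * Q j) hdg2
        rw [this, coeff_helper2, if_pos (by omega), Nat.add_sub_cancel,
          fam_coeff_self hQdeg, fam_coeff_zero hQdeg (by omega), mul_zero, add_zero]
      · rw [if_neg (by omega)]
        rw [int_zero hQdeg hwa' hQorth _ hdg2 (by omega), mul_zero]
    set f3 : ℝ → ℝ := fun y =>
      (Polynomial.C rt * Q k).eval y * (Q j).eval y * wgt (l-1) ζ y with hf3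
    have heq3 : f3 = fun y => rt * ((Q k).eval y * (Q j).eval y * wgt (l-1) ζ y) := by
      funext y
      simp only [hf3, eval_mul, eval_C]
      ring
    have hI3 : IntegrableOn f3 (Ioi 1) := by
      rw [heq3]
      exact (int_pair hwa' hQorth k j).const_mul rt
    have hv3 : (∫ y in Ioi (1:ℝ), f3 y) = (if j = k then rt else 0) := by
      rw [heq3, MeasureTheory.integral_const_mul, hQorth k j]
      rcases eq_or_ne j k with rfl | hne
      · simp
      · rw [if_neg (Ne.symm hne), if_neg hne, mul_zero]
    have hsplit : Set.EqOn (fun y => Dp.eval y * (Q j).eval y * wgt (l-1) ζ y)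
        (fun y => f1 y - f2 y - f3 y) (Ioi 1) := by
      intro y _
      simp only [hDp, hf1, hf2, hf3, eval_sub, eval_mul]
      ring
    rw [setIntegral_congr_fun measurableSet_Ioi hsplit]
    have h12 : IntegrableOn (fun y => f1 y - f2 y) (Ioi 1) volume := hI1.sub hI2
    rw [MeasureTheory.integral_sub h12 hI3, MeasureTheory.integral_sub hI1 hI2, hv1, hv2, hv3]
    rcases eq_or_ne j k with rfl | hne
    · simp only [if_pos rfl]
      rw [hrt, hpt, hlamdef]
      exact alg_D (l:ℝ) (P j).leadingCoeff (Q (j+1)).leadingCoeff (Q j).leadingCoeff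
        (hPlc j) (hQlc (j+1)) (ne_of_gt h2l1) (ne_of_gt h2l2)
    · simp [hne]
  have hD0 : Dp = 0 := by
    obtain ⟨a, ha⟩ := expand_aux Q hQdeg k Dp hDdeg
    rw [ha]
    apply Finset.sum_eq_zero
    intro j hj
    have hjk : j ≤ k := Nat.lt_succ_iff.1 (Finset.mem_range.1 hj)
    have hz := hDint j hjk
    rw [int_val hQdeg hwa' hQorth ha j, if_pos hjk] at hz
    rw [hz, map_zero, zero_mul]
  have hid1 : lam * (x ^ 2 - 1) * (P k).eval x
      = pt * (x + qt) * (Q (k + 1)).eval x + rt * (Q k).eval x := by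
    have hev : Dp.eval x = 0 := by rw [hD0, eval_zero]
    rw [hDp] at hev
    simp only [eval_sub, eval_mul, eval_add, eval_pow, eval_C, eval_X, eval_one] at hev
    linarith
  refine ⟨hid1, ?_⟩
  -- ===================== Identity 2 =====================
  set cE : ℝ := (if k = 0 then 0 else
    pt * (((P (k-1)).leadingCoeff * (Q (k+1)).leadingCoeff)
      / ((P k).leadingCoeff * (Q k).leadingCoeff)) * rt) with hcE
  set Ep : Polynomial ℝ := Polynomial.C pt * Q (k+1)
    - Polynomial.C lam * ((X:Polynomial ℝ) - Polynomial.C qt) * P k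
    + Polynomial.C cE * P (k-1) with hEp
  have hEcoeff0 : ∀ m : ℕ, Ep.coeff m
      = pt * (Q (k+1)).coeff m
        - lam * ((if 1 ≤ m then (P k).coeff (m-1) else 0) - qt * (P k).coeff m)
        + cE * (P (k-1)).coeff m := by
    intro m
    rw [hEp, coeff_add, coeff_sub, coeff_C_mul, mul_assoc, coeff_C_mul, coeff_helper3,
      coeff_C_mul]
  have hEcoeff : ∀ m : ℕ, k ≤ m → Ep.coeff m = 0 := by
    intro m hm
    have hlast : cE * (P (k-1)).coeff m = 0 := by
      rcases Nat.eq_zero_or_pos k with rfl | hk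
      · rw [hcE, if_pos rfl, zero_mul]
      · rw [fam_coeff_zero hPdeg (by omega), mul_zero]
    rw [hEcoeff0 m, hlast, add_zero]
    rcases show m = k ∨ m = k+1 ∨ k+2 ≤ m from by omega with h | h | h
    · rw [h]
      rcases Nat.eq_zero_or_pos k with rfl | hk
      · have hrsP : rootSum (P 0) = 0 := by
          unfold rootSum
          rw [fam_natDegree hPdeg]
          simp
        have hqt : qt = -((Q 1).coeff 0) / (Q 1).leadingCoeff := by
          rw [hqtdef]
          unfold qtC
          rw [hrsP, hrsQ, sub_zero]
        rw [if_neg (by omega : ¬ 1 ≤ 0), hqt, fam_coeff_self hPdeg 0, hpt]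
        field_simp
        ring
      · have hrsP : rootSum (P k) = -((P k).coeff (k-1)) / (P k).leadingCoeff := by
          unfold rootSum
          rw [fam_natDegree hPdeg, if_neg (by omega)]
        have hqt : qt = -((Q (k+1)).coeff k) / (Q (k+1)).leadingCoeff
            + ((P k).coeff (k-1)) / (P k).leadingCoeff := by
          rw [hqtdef]; unfold qtC; rw [hrsP, hrsQ]; ring
        rw [if_pos (by omega : 1 ≤ k), fam_coeff_self hPdeg k, hqt, hpt]
        field_simp [hPlc k, hQlc (k+1)]
        ring
    · rw [h, if_pos (by omega), Nat.add_sub_cancel, fam_coeff_self hPdeg k,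
        fam_coeff_self hQdeg (k+1), fam_coeff_zero hPdeg (by omega), hpt]
      field_simp [hQlc (k+1)]
      ring
    · rw [fam_coeff_zero hQdeg (by omega), fam_coeff_zero hPdeg (by omega : k < m),
        fam_coeff_zero hPdeg (by omega : k < m - 1)]
      split <;> ring
  have hEint : ∀ j : ℕ, j + 1 ≤ k →
      (∫ y in Ioi (1:ℝ), Ep.eval y * (P j).eval y * wgt l ζ y) = 0 := by
    intro j hj
    set f1 : ℝ → ℝ := fun y =>
      (Polynomial.C pt * Q (k+1)).eval y * (P j).eval y * wgt l ζ y with hf1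
    set g1 : ℝ → ℝ := fun y =>
      pt * ((Polynomial.C lam * ((X:Polynomial ℝ)^2 - 1) * P j).eval y
        * (Q (k+1)).eval y * wgt (l-1) ζ y) with hg1
    have heq1 : Set.EqOn f1 g1 (Ioi 1) := by
      intro y hy
      simp only [hf1, hg1, eval_mul, eval_sub, eval_pow, eval_C, eval_X, eval_one]
      rw [wgt_rel hl ζ hy]
      ring
    have hI1g : IntegrableOn g1 (Ioi 1) :=
      (int_poly hQdeg hwa' hQorth _ (k+1)).const_mul pt
    have hI1 : IntegrableOn f1 (Ioi 1) :=
      IntegrableOn.congr_fun hI1g heq1.symm measurableSet_Ioi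
    have hdg1 : (Polynomial.C lam * ((X:Polynomial ℝ)^2 - 1) * P j).degree
        ≤ ((j+2 : ℕ) : WithBot ℕ) := by
      rw [degree_le_iff_coeff_zero]
      intro m hm
      have hm' : j + 2 < m := by exact_mod_cast hm
      rw [mul_assoc, coeff_C_mul, coeff_helper1, fam_coeff_zero hPdeg (by omega : j < m)]
      rcases le_or_gt 2 m with h2m | h2m
      · rw [if_pos h2m, fam_coeff_zero hPdeg (by omega : j < m - 2)]
        ring
      · rw [if_neg (by omega)]
        ring
    have hv1 : (∫ y in Ioi (1:ℝ), f1 y)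
        = (if j + 1 = k then
            pt * (lam * (P j).leadingCoeff / (Q (k+1)).leadingCoeff) else 0) := by
      rw [setIntegral_congr_fun measurableSet_Ioi heq1, hg1, MeasureTheory.integral_const_mul]
      rcases eq_or_ne (j+1) k with he | hne
      · rw [if_pos he]
        have h2' : j + 2 = k + 1 := by omega
        have hdg1' : (Polynomial.C lam * ((X:Polynomial ℝ)^2 - 1) * P j).degree
            ≤ ((k+1 : ℕ) : WithBot ℕ) := by rw [← h2']; exact hdg1
        rw [int_top hQdeg hwa' hQorth _ hdg1']
        congr 1
        rw [mul_assoc, coeff_C_mul, coeff_helper1, if_pos (by omega : 2 ≤ k+1),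
          show k+1-2 = j by omega, fam_coeff_self hPdeg j,
          fam_coeff_zero hPdeg (by omega : j < k + 1), sub_zero]
      · rw [if_neg hne]
        have hdg1' : (Polynomial.C lam * ((X:Polynomial ℝ)^2 - 1) * P j).degree
            ≤ ((j+2 : ℕ) : WithBot ℕ) := hdg1
        rw [int_zero hQdeg hwa' hQorth _ hdg1' (by omega), mul_zero]
    set f2 : ℝ → ℝ := fun y =>
      (Polynomial.C lam * ((X:Polynomial ℝ) - Polynomial.C qt) * P k).eval y
        * (P j).eval y * wgt l ζ y with hf2
    have heq2 : f2 = fun y => lam * ((((X:Polynomial ℝ) - Polynomial.C qt) * P j).eval y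
        * (P k).eval y * wgt l ζ y) := by
      funext y
      simp only [hf2, eval_mul, eval_sub, eval_C, eval_X]
      ring
    have hI2 : IntegrableOn f2 (Ioi 1) := by
      rw [heq2]
      exact (int_poly hPdeg hwa hPorth _ k).const_mul lam
    have hdg2 : (((X:Polynomial ℝ) - Polynomial.C qt) * P j).degree
        ≤ ((j+1 : ℕ) : WithBot ℕ) := by
      rw [degree_le_iff_coeff_zero]
      intro m hm
      have hm' : j + 1 < m := by exact_mod_cast hm
      rw [coeff_helper3, fam_coeff_zero hPdeg (by omega : j < m),
        fam_coeff_zero hPdeg (by omega : j < m - 1), if_pos (by omega)]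
      ring
    have hv2 : (∫ y in Ioi (1:ℝ), f2 y)
        = (if j + 1 = k then lam * ((P j).leadingCoeff / (P k).leadingCoeff) else 0) := by
      rw [heq2, MeasureTheory.integral_const_mul]
      rcases eq_or_ne (j+1) k with he | hne
      · rw [if_pos he]
        have hdg2' : (((X:Polynomial ℝ) - Polynomial.C qt) * P j).degree
            ≤ ((k : ℕ) : WithBot ℕ) := by rw [← he]; exact hdg2
        rw [int_top hPdeg hwa hPorth _ hdg2']
        congr 1
        rw [coeff_helper3, if_pos (by omega : 1 ≤ k), show k-1 = j by omega,
          fam_coeff_self hPdeg j, fam_coeff_zero hPdeg (by omega : j < k), mul_zero, sub_zero]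
      · rw [if_neg hne]
        rw [int_zero hPdeg hwa hPorth _ hdg2 (by omega), mul_zero]
    set f3 : ℝ → ℝ := fun y =>
      (Polynomial.C cE * P (k-1)).eval y * (P j).eval y * wgt l ζ y with hf3
    have heq3 : f3 = fun y => cE * ((P (k-1)).eval y * (P j).eval y * wgt l ζ y) := by
      funext y
      simp only [hf3, eval_mul, eval_C]
      ring
    have hI3 : IntegrableOn f3 (Ioi 1) := by
      rw [heq3]
      exact (int_pair hwa hPorth (k-1) j).const_mul cE
    have hv3 : (∫ y in Ioi (1:ℝ), f3 y) = (if j + 1 = k then cE else 0) := by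
      rw [heq3, MeasureTheory.integral_const_mul, hPorth (k-1) j]
      rcases eq_or_ne (j+1) k with he | hne
      · rw [if_pos he, if_pos (by omega), mul_one]
      · rw [if_neg (by omega), if_neg hne, mul_zero]
    have hsplit : Set.EqOn (fun y => Ep.eval y * (P j).eval y * wgt l ζ y)
        (fun y => f1 y - f2 y + f3 y) (Ioi 1) := by
      intro y _
      simp only [hEp, hf1, hf2, hf3, eval_add, eval_sub, eval_mul]
      ring
    rw [setIntegral_congr_fun measurableSet_Ioi hsplit]
    have h12 : IntegrableOn (fun y => f1 y - f2 y) (Ioi 1) volume := hI1.sub hI2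
    rw [MeasureTheory.integral_add h12 hI3, MeasureTheory.integral_sub hI1 hI2, hv1, hv2, hv3]
    rcases eq_or_ne (j+1) k with he | hne
    · simp only [if_pos he]
      rw [hcE, if_neg (by omega : ¬ k = 0), show k - 1 = j by omega, hrt, hpt, hlamdef]
      exact alg_E (l:ℝ) (P k).leadingCoeff (Q (k+1)).leadingCoeff (Q k).leadingCoeff
        (P j).leadingCoeff (hPlc k) (hQlc (k+1)) (hQlc k) (ne_of_gt h2l1) (ne_of_gt h2l2)
    · simp [hne]
  have hE0 : Ep = 0 := by
    rcases Nat.eq_zero_or_pos k with rfl | hk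
    · apply Polynomial.ext
      intro m
      rw [hEcoeff m (Nat.zero_le m), coeff_zero]
    · have hEdeg : Ep.degree ≤ ((k-1 : ℕ) : WithBot ℕ) := by
        rw [degree_le_iff_coeff_zero]
        intro m hm
        have hm' : k - 1 < m := by exact_mod_cast hm
        exact hEcoeff m (by omega)
      obtain ⟨a, ha⟩ := expand_aux P hPdeg (k-1) Ep hEdeg
      rw [ha]
      apply Finset.sum_eq_zero
      intro j hj
      have hjk : j ≤ k - 1 := Nat.lt_succ_iff.1 (Finset.mem_range.1 hj)
      have hz := hEint j (by omega)
      rw [int_val hPdeg hwa hPorth ha j, if_pos hjk] at hz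
      rw [hz, map_zero, zero_mul]
  have hev : pt * (Q (k+1)).eval x - lam * (x - qt) * (P k).eval x
      + cE * (P (k-1)).eval x = 0 := by
    have h0 : Ep.eval x = 0 := by rw [hE0, eval_zero]
    rw [hEp] at h0
    simp only [eval_add, eval_sub, eval_mul, eval_C, eval_X] at h0
    linarith
  rcases Nat.eq_zero_or_pos k with rfl | hk
  · rw [if_pos rfl, sub_zero]
    rw [hcE, if_pos rfl, zero_mul, add_zero] at hev
    field_simp
    linear_combination hev
  · rw [if_neg (by omega : ¬ k = 0)]
    rw [hcE, if_neg (by omega : ¬ k = 0)] at hev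
    field_simp
    linear_combination hev
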